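/- Let n ≥ 1 be a natural number, q ∈ (0,1], and x ∈ (0,1] with q*x < 1. Then the sum over k from 0 to n-1 of C(n-1,k) * x^k * (1-x)^(n-1-k) * (1 - (1-q)^(k+1))/(k+1) equals (1 - (1 - q*x)^n)/(n*x). -/
import Mathlib

lemma aux_sum (m : ℕ) (a b : ℝ) :
    ∑ k ∈ Finset.range (m + 1), ((m + 1).choose (k + 1) : ℝ) * a ^ (k + 1) * b ^ (m - k)
      = (a + b) ^ (m + 1) - b ^ (m + 1) := by
  rw [add_pow]
  rw [Finset.sum_range_succ' (fun j => a ^ j * b ^ (m + 1 - j) * ((m + 1).choose j : ℝ)) (m + 1)]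
  simp only [pow_zero, Nat.choose_zero_right, Nat.cast_one, one_mul, mul_one, Nat.sub_zero]
  rw [add_sub_cancel_right]
  apply Finset.sum_congr rfl
  intro k _
  have : m + 1 - (k + 1) = m - k := by omega
  rw [this]; ring

theorem stmt_9 (n : ℕ) (hn : 1 ≤ n) (q x : ℝ) (hq0 : 0 < q) (hq1 : q ≤ 1)
    (hx0 : 0 < x) (hx1 : x ≤ 1) (hqx : q * x < 1) :
    ∑ k ∈ Finset.range n,
        ((n - 1).choose k : ℝ) * x ^ k * (1 - x) ^ (n - 1 - k)
          * (1 - (1 - q) ^ (k + 1)) / (k + 1)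
      = (1 - (1 - q * x) ^ n) / (n * x) := by
  obtain ⟨m, rfl⟩ : ∃ m, n = m + 1 := ⟨n - 1, (Nat.succ_pred_eq_of_pos hn).symm⟩
  simp only [Nat.add_sub_cancel]
  rw [eq_div_iff (by positivity)]
  rw [Finset.sum_mul]
  have key : ∀ k ∈ Finset.range (m + 1),
      (↑(m.choose k) * x ^ k * (1 - x) ^ (m - k) * (1 - (1 - q) ^ (k + 1)) / (↑k + 1))
        * (↑(m + 1) * x)
      = ((m + 1).choose (k + 1) : ℝ) * x ^ (k + 1) * (1 - x) ^ (m - k)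
        - ((m + 1).choose (k + 1) : ℝ) * (x * (1 - q)) ^ (k + 1) * (1 - x) ^ (m - k) := by
    intro k _
    have hch : ((m + 1).choose (k + 1) : ℝ) * (k + 1) = (m + 1) * (m.choose k) := by
      exact_mod_cast congrArg (Nat.cast : ℕ → ℝ) (Nat.add_one_mul_choose_eq m k).symm
    have hk : (k : ℝ) + 1 ≠ 0 := by positivity
    rw [div_mul_eq_mul_div, div_eq_iff hk]
    rw [mul_pow]
    push_cast
    linear_combination (x ^ (k + 1) * (1 - q) ^ (k + 1) * (1 - x) ^ (m - k)
      - x ^ (k + 1) * (1 - x) ^ (m - k)) * hch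
  rw [Finset.sum_congr rfl key, Finset.sum_sub_distrib, aux_sum, aux_sum]
  have h1 : x + (1 - x) = 1 := by ring
  have h2 : x * (1 - q) + (1 - x) = 1 - q * x := by ring
  rw [h1, h2, one_pow]
  ring
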